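/- Let n ≥ 1, q = 3^n, let C_0 be the nonzero squares of F_q and C_1 the nonsquares, and let α, β, γ, θ ∈ F_q^*. Define f : F_q → F_q by f(0) = 0, f(x) = α(x^3 + γx^2 + γ^2 x) for x ∈ C_0, and f(x) = β(x^3 + θx^2 + θ^2 x) for x ∈ C_1. Then f is a bijection of F_q if and only if: γ is a nonsquare in F_q, θ is a nonzero square in F_q, and (α is a nonzero square ↔ β is a nonzero square). -/

import Mathlib

section aux
variable {F : Type*} [Field F] [Fintype F]

lemma mul_sq_iff' [DecidableEq F] {a b : F} (ha : a ≠ 0) (hb : b ≠ 0) :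
    IsSquare (a * b) ↔ (IsSquare a ↔ IsSquare b) := by
  rw [← quadraticChar_one_iff_isSquare (mul_ne_zero ha hb),
      ← quadraticChar_one_iff_isSquare ha, ← quadraticChar_one_iff_isSquare hb, map_mul]
  rcases quadraticChar_dichotomy ha with h | h <;>
    rcases quadraticChar_dichotomy hb with h' | h' <;> simp [h, h']

lemma mul_sq_iff {a b : F} (ha : a ≠ 0) (hb : b ≠ 0) :
    IsSquare (a * b) ↔ (IsSquare a ↔ IsSquare b) := by
  classical exact mul_sq_iff' ha hb

lemma inj_aux (h3 : (3 : F) = 0) {a b c : F}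
    (ha : a ≠ 0) (hb : b ≠ 0) (hc : c ≠ 0)
    (hab : IsSquare a ↔ IsSquare b) (hac : ¬(IsSquare a ↔ IsSquare c))
    (heq : a * (a - c) ^ 2 = b * (b - c) ^ 2) : a = b := by
  by_contra hne
  have h0 : (a - b) * ((c - a - b) ^ 2 - a * b) = 0 := by linear_combination heq
  have h1 : (c - a - b) ^ 2 = a * b := by
    rcases mul_eq_zero.1 h0 with h | h
    · exact absurd (sub_eq_zero.1 h) hne
    · linear_combination h
  obtain ⟨w, hw⟩ : IsSquare (a * b) := (mul_sq_iff ha hb).2 hab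
  have h2 : (c - a - b - w) * (c - a - b + w) = 0 := by linear_combination h1 + hw
  apply hac
  have hsq : IsSquare (a * c) := by
    rcases mul_eq_zero.1 h2 with h | h
    · exact ⟨a - w, by linear_combination a * h + hw + (a * w) * h3⟩
    · exact ⟨a + w, by linear_combination a * h + hw - (a * w) * h3⟩
  exact (mul_sq_iff ha hc).1 hsq

end aux

theorem stmt_15 {F : Type*} [Field F] [Fintype F] (n : ℕ) (hn : 1 ≤ n)
    (hcard : Fintype.card F = 3 ^ n)
    (α β γ θ : F) (hα : α ≠ 0) (hβ : β ≠ 0) (hγ : γ ≠ 0) (hθ : θ ≠ 0)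
    (f : F → F)
    (hf0 : f 0 = 0)
    (hfs : ∀ x : F, x ≠ 0 → IsSquare x → f x = α * (x ^ 3 + γ * x ^ 2 + γ ^ 2 * x))
    (hfn : ∀ x : F, x ≠ 0 → ¬ IsSquare x → f x = β * (x ^ 3 + θ * x ^ 2 + θ ^ 2 * x)) :
    Function.Bijective f ↔
      (¬ IsSquare γ ∧ IsSquare θ ∧ (IsSquare α ↔ IsSquare β)) := by
  have h3 : (3 : F) = 0 := by
    have hc : ((Fintype.card F : ℕ) : F) = 0 := FiniteField.cast_card_eq_zero F
    rw [hcard] at hc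
    push_cast at hc
    exact pow_eq_zero_iff (by omega) |>.1 hc
  have hchar : ringChar F = 3 := by
    have hd : ringChar F ∣ 3 := (ringChar.spec F 3).mp (by exact_mod_cast h3)
    have hp : (ringChar F).Prime := CharP.char_is_prime F (ringChar F)
    exact (Nat.prime_dvd_prime_iff_eq hp (by norm_num)).1 hd
  have h2c : ringChar F ≠ 2 := by rw [hchar]; norm_num
  have hfs' : ∀ x : F, x ≠ 0 → IsSquare x → f x = α * (x * (x - γ) ^ 2) := by
    intro x hx hsx
    rw [hfs x hx hsx]; linear_combination (α * γ * x ^ 2) * h3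
  have hfn' : ∀ x : F, x ≠ 0 → ¬IsSquare x → f x = β * (x * (x - θ) ^ 2) := by
    intro x hx hsx
    rw [hfn x hx hsx]; linear_combination (β * θ * x ^ 2) * h3
  have hval_s : ¬IsSquare γ → ∀ x : F, x ≠ 0 → IsSquare x →
      f x ≠ 0 ∧ (IsSquare (f x) ↔ IsSquare α) := by
    intro hγs x hx hsx
    have hxγ : x - γ ≠ 0 := fun h => hγs (sub_eq_zero.1 h ▸ hsx)
    have ht0 : x * (x - γ) ^ 2 ≠ 0 := mul_ne_zero hx (pow_ne_zero 2 hxγ)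
    have hts : IsSquare (x * (x - γ) ^ 2) :=
      (mul_sq_iff hx (pow_ne_zero 2 hxγ)).2 (by simp [hsx, IsSquare.sq])
    rw [hfs' x hx hsx]
    exact ⟨mul_ne_zero hα ht0, by rw [mul_sq_iff hα ht0]; simp [hts]⟩
  have hval_n : IsSquare θ → ∀ x : F, x ≠ 0 → ¬IsSquare x →
      f x ≠ 0 ∧ (IsSquare (f x) ↔ ¬IsSquare β) := by
    intro hθs x hx hsx
    have hxθ : x - θ ≠ 0 := fun h => hsx (sub_eq_zero.1 h ▸ hθs)
    have ht0 : x * (x - θ) ^ 2 ≠ 0 := mul_ne_zero hx (pow_ne_zero 2 hxθ)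
    have htn : ¬IsSquare (x * (x - θ) ^ 2) := fun h =>
      hsx (by simpa [IsSquare.sq] using (mul_sq_iff hx (pow_ne_zero 2 hxθ)).1 h)
    rw [hfn' x hx hsx]
    refine ⟨mul_ne_zero hβ ht0, ?_⟩
    rw [mul_sq_iff hβ ht0]
    tauto
  constructor
  · intro hbij
    have hγs : ¬IsSquare γ := by
      intro hγs
      have h : f γ = 0 := by rw [hfs' γ hγ hγs]; ring
      exact hγ (hbij.1 (h.trans hf0.symm))
    have hθs : IsSquare θ := by
      by_contra hθs
      have h : f θ = 0 := by rw [hfn' θ hθ hθs]; ring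
      exact hθ (hbij.1 (h.trans hf0.symm))
    refine ⟨hγs, hθs, ?_⟩
    by_contra hne
    have hall : ∀ x : F, f x ≠ 0 → (IsSquare (f x) ↔ IsSquare α) := by
      intro x hfx
      have hx : x ≠ 0 := fun h => hfx (h ▸ hf0)
      by_cases hsx : IsSquare x
      · exact (hval_s hγs x hx hsx).2
      · rw [(hval_n hθs x hx hsx).2]; tauto
    obtain ⟨d, hd⟩ := FiniteField.exists_nonsquare (F := F) h2c
    by_cases hsα : IsSquare α
    · obtain ⟨x, hx⟩ := hbij.2 d
      have hd0 : d ≠ 0 := fun h => hd (h ▸ IsSquare.zero)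
      have := hall x (hx ▸ hd0)
      rw [hx] at this
      exact hd (this.2 hsα)
    · obtain ⟨x, hx⟩ := hbij.2 1
      have := hall x (hx ▸ one_ne_zero)
      rw [hx] at this
      exact hsα (this.1 IsSquare.one)
  · rintro ⟨hγs, hθs, hαβ⟩
    have hne0 : ∀ z : F, z ≠ 0 → f z ≠ 0 := by
      intro z hz
      by_cases h : IsSquare z
      · exact (hval_s hγs z hz h).1
      · exact (hval_n hθs z hz h).1
    have hinj : Function.Injective f := by
      intro x y hxy
      rcases eq_or_ne x 0 with rfl | hx
      · rcases eq_or_ne y 0 with rfl | hy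
        · rfl
        · exact absurd (hxy.symm.trans hf0) (hne0 y hy)
      · rcases eq_or_ne y 0 with rfl | hy
        · exact absurd (hxy.trans hf0) (hne0 x hx)
        · by_cases hsx : IsSquare x <;> by_cases hsy : IsSquare y
          · have e1 := hfs' x hx hsx
            have e2 := hfs' y hy hsy
            have h : x * (x - γ) ^ 2 = y * (y - γ) ^ 2 :=
              mul_left_cancel₀ hα (by rw [← e1, ← e2, hxy])
            exact inj_aux h3 hx hy hγ (iff_of_true hsx hsy) (by simp [hsx, hγs]) h
          · exfalso
            have h1 := (hval_s hγs x hx hsx).2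
            have h2 := (hval_n hθs y hy hsy).2
            rw [hxy] at h1
            tauto
          · exfalso
            have h1 := (hval_n hθs x hx hsx).2
            have h2 := (hval_s hγs y hy hsy).2
            rw [hxy] at h1
            tauto
          · have e1 := hfn' x hx hsx
            have e2 := hfn' y hy hsy
            have h : x * (x - θ) ^ 2 = y * (y - θ) ^ 2 :=
              mul_left_cancel₀ hβ (by rw [← e1, ← e2, hxy])
            exact inj_aux h3 hx hy hθ (iff_of_false hsx hsy) (by simp [hsx, hθs]) h
    exact Finite.injective_iff_bijective.1 hinj
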